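/- Let σ(x) = (ax+b)/(cx+d) with a,b,c,d ≥ 0, ad − bc = ±1, and let G be a positive random variable such that σ(G) > 0 a.s. and all logs below are integrable. Define σ̃(λ) = (dλ+b)/(cλ+a) and ψ_X(λ) = E[log(1 + λ/X)]. Then for all λ > 0: −ψ_G(σ̃(λ)) + ψ_{σ(G)}(λ) = log(cλ + a) + E[log(G/(aG + b))]. -/

import Mathlib

open MeasureTheory Set Real

lemma pos_aux {a b x : ℝ} (ha : 0 ≤ a) (hb : 0 ≤ b) (hx : 0 < x)
    (hne : ¬(a = 0 ∧ b = 0)) : 0 < a * x + b := by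
  rcases ha.eq_or_lt with h | h
  · rcases hb.eq_or_lt with h' | h'
    · exact absurd ⟨h.symm, h'.symm⟩ hne
    · simpa [← h] using h'
  · nlinarith

theorem duality_bernstein_mobius {Ω : Type*} [MeasurableSpace Ω] (μ : Measure Ω)
    [IsProbabilityMeasure μ] (a b c d : ℝ) (ha : 0 ≤ a) (hb : 0 ≤ b)
    (hc : 0 ≤ c) (hd : 0 ≤ d) (hdet : a * d - b * c = 1 ∨ a * d - b * c = -1)
    (G : Ω → ℝ) (hG_meas : Measurable G) (hG_pos : ∀ ω, 0 < G ω)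
    (hσ_pos : ∀ ω, 0 < (a * G ω + b) / (c * G ω + d))
    (hG_int : Integrable (fun ω => Real.log (G ω)) μ)
    (hab_int : Integrable (fun ω => Real.log (a * G ω + b)) μ)
    (hcd_int : Integrable (fun ω => Real.log (c * G ω + d)) μ) :
    ∀ l : ℝ, 0 < l →
      -(∫ ω, Real.log (1 + ((d * l + b) / (c * l + a)) / G ω) ∂μ) +
          (∫ ω, Real.log (1 + l / ((a * G ω + b) / (c * G ω + d))) ∂μ)
        = Real.log (c * l + a) + ∫ ω, Real.log (G ω / (a * G ω + b)) ∂μ := by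
  intro l hl
  have hab : ¬(a = 0 ∧ b = 0) := by
    rintro ⟨rfl, rfl⟩; rcases hdet with h | h <;> nlinarith
  have hcd : ¬(c = 0 ∧ d = 0) := by
    rintro ⟨rfl, rfl⟩; rcases hdet with h | h <;> nlinarith
  have hac : ¬(c = 0 ∧ a = 0) := by
    rintro ⟨rfl, rfl⟩; rcases hdet with h | h <;> nlinarith
  have hbd : ¬(d = 0 ∧ b = 0) := by
    rintro ⟨rfl, rfl⟩; rcases hdet with h | h <;> nlinarith
  have hcla : 0 < c * l + a := pos_aux hc ha hl hac
  have hdlb : 0 < d * l + b := pos_aux hd hb hl hbd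
  have habG : ∀ ω, 0 < a * G ω + b := fun ω => pos_aux ha hb (hG_pos ω) hab
  have hcdG : ∀ ω, 0 < c * G ω + d := fun ω => pos_aux hc hd (hG_pos ω) hcd
  set N : Ω → ℝ := fun ω => (c * l + a) * G ω + (d * l + b) with hN
  have hNpos : ∀ ω, 0 < N ω := fun ω => by
    have := hG_pos ω; simp only [hN]; nlinarith
  -- pointwise rewriting of the two log terms
  have hf1 : ∀ ω, Real.log (1 + ((d * l + b) / (c * l + a)) / G ω)
      = Real.log (N ω) - Real.log (c * l + a) - Real.log (G ω) := by
    intro ω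
    have hG := hG_pos ω
    have harg : 1 + ((d * l + b) / (c * l + a)) / G ω = N ω / ((c * l + a) * G ω) := by
      simp only [hN]
      rw [div_div, eq_div_iff (mul_pos hcla hG).ne', add_mul, one_mul,
        div_mul_cancel₀ _ (mul_pos hcla hG).ne']
    rw [harg, Real.log_div (hNpos ω).ne' (by positivity),
      Real.log_mul hcla.ne' hG.ne']
    ring
  have hf2 : ∀ ω, Real.log (1 + l / ((a * G ω + b) / (c * G ω + d)))
      = Real.log (N ω) - Real.log (a * G ω + b) := by
    intro ω
    have h1 := habG ω; have h2 := hcdG ω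
    have harg : 1 + l / ((a * G ω + b) / (c * G ω + d)) = N ω / (a * G ω + b) := by
      field_simp [hN]; ring
    rw [harg, Real.log_div (hNpos ω).ne' h1.ne']
  -- integrability of log N
  have hNmeas : Measurable fun ω => Real.log (N ω) :=
    ((measurable_const.mul hG_meas).add measurable_const).log
  have hlogN_int : Integrable (fun ω => Real.log (N ω)) μ := by
    apply Integrable.mono'
      (g := fun ω => Real.log 2 + |Real.log (c * l + a) + Real.log (G ω)|
        + |Real.log (d * l + b)|)
    · exact (((integrable_const _).add ((integrable_const _).add hG_int).abs).add
        (integrable_const _))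
    · exact hNmeas.aestronglyMeasurable
    · refine Filter.Eventually.of_forall fun ω => ?_
      have hG := hG_pos ω
      set A : ℝ := (c * l + a) * G ω with hA
      have hApos : 0 < A := by positivity
      have hlogA : Real.log A = Real.log (c * l + a) + Real.log (G ω) :=
        Real.log_mul hcla.ne' hG.ne'
      rw [Real.norm_eq_abs, abs_le]
      have hmax : N ω ≤ 2 * max A (d * l + b) := by
        have h1 := le_max_left A (d * l + b)
        have h2 := le_max_right A (d * l + b)
        simp only [hN, hA] at *; linarith
      have hmaxpos : 0 < max A (d * l + b) := lt_max_of_lt_left hApos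
      have hub : Real.log (N ω) ≤ Real.log 2 + max (Real.log A) (Real.log (d * l + b)) := by
        calc Real.log (N ω) ≤ Real.log (2 * max A (d * l + b)) :=
              Real.log_le_log (hNpos ω) hmax
          _ = Real.log 2 + Real.log (max A (d * l + b)) :=
              Real.log_mul two_ne_zero hmaxpos.ne'
          _ = Real.log 2 + max (Real.log A) (Real.log (d * l + b)) := by
              rcases le_total A (d * l + b) with h | h
              · rw [max_eq_right h, max_eq_right (Real.log_le_log hApos h)]
              · rw [max_eq_left h, max_eq_left (Real.log_le_log hdlb h)]
      constructor
      · have h1 : -|Real.log (d * l + b)| ≤ Real.log (d * l + b) := neg_abs_le _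
        have h2 : Real.log (d * l + b) ≤ Real.log (N ω) := by
          apply Real.log_le_log hdlb
          have := hG_pos ω; simp only [hN]; nlinarith
        have h3 : (0:ℝ) ≤ Real.log 2 := Real.log_nonneg one_le_two
        have h4 : (0:ℝ) ≤ |Real.log (c * l + a) + Real.log (G ω)| := abs_nonneg _
        linarith
      · have h5 : max (Real.log A) (Real.log (d * l + b))
            ≤ |Real.log (c * l + a) + Real.log (G ω)| + |Real.log (d * l + b)| := by
          rw [hlogA] at hub ⊢
          apply max_le
          · exact le_add_of_le_of_nonneg (le_abs_self _) (abs_nonneg _)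
          · exact le_add_of_nonneg_of_le (abs_nonneg _) (le_abs_self _)
        linarith
  -- integrability of the two integrands
  have hI1 : Integrable (fun ω => Real.log (1 + ((d * l + b) / (c * l + a)) / G ω)) μ := by
    have h' : Integrable (fun ω => Real.log (N ω) - (Real.log (c * l + a) + Real.log (G ω))) μ :=
      hlogN_int.sub ((integrable_const _).add hG_int)
    refine h'.congr (Filter.Eventually.of_forall fun ω => ?_)
    dsimp only
    rw [hf1 ω]; ring
  have hI2 : Integrable (fun ω => Real.log (1 + l / ((a * G ω + b) / (c * G ω + d)))) μ := by
    have h' : Integrable (fun ω => Real.log (N ω) - Real.log (a * G ω + b)) μ :=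
      hlogN_int.sub hab_int
    refine h'.congr (Filter.Eventually.of_forall fun ω => ?_)
    dsimp only
    rw [hf2 ω]
  -- main computation
  have hsub : (∫ ω, Real.log (1 + l / ((a * G ω + b) / (c * G ω + d))) ∂μ)
      - (∫ ω, Real.log (1 + ((d * l + b) / (c * l + a)) / G ω) ∂μ)
      = ∫ ω, (Real.log (c * l + a) + (Real.log (G ω) - Real.log (a * G ω + b))) ∂μ := by
    rw [← integral_sub hI2 hI1]
    refine integral_congr_ae (Filter.Eventually.of_forall fun ω => ?_)
    dsimp only
    rw [hf1 ω, hf2 ω]; ring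
  have hrhs : (∫ ω, Real.log (G ω / (a * G ω + b)) ∂μ)
      = (∫ ω, Real.log (G ω) ∂μ) - ∫ ω, Real.log (a * G ω + b) ∂μ := by
    rw [← integral_sub hG_int hab_int]
    refine integral_congr_ae (Filter.Eventually.of_forall fun ω => ?_)
    dsimp only
    exact Real.log_div (hG_pos ω).ne' (habG ω).ne'
  rw [hrhs]
  have : ∫ ω, (Real.log (c * l + a) + (Real.log (G ω) - Real.log (a * G ω + b))) ∂μ
      = Real.log (c * l + a) + ((∫ ω, Real.log (G ω) ∂μ) - ∫ ω, Real.log (a * G ω + b) ∂μ) := by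
    have h' : Integrable (fun ω => Real.log (G ω) - Real.log (a * G ω + b)) μ :=
      hG_int.sub hab_int
    rw [integral_add (integrable_const _) h', integral_const,
      integral_sub hG_int hab_int]
    simp
  linarith [hsub, this]
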